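/- Let a_1 ≤ c_1 < a_2 ≤ c_2 < … < a_m ≤ c_m be real numbers and set b_i = (a_i + c_i)/2. Define the 2×3m real matrices A with columns (a_i, 2a_i), (b_i, 2b_i), (c_i, 2c_i) for i = 1, …, m, and B with columns (0, a_i), (0, c_i), (0, b_i). Then the spectrum of the two-sided max-plus eigenproblem A ⊗ x = λ ⊗ B ⊗ x equals the union of the intervals [a_i, c_i], i = 1, …, m. In particular, every finite union of closed intervals and points on the real line is the spectrum of some two-sided max-plus eigenproblem. -/

import Mathlib

open Finset

/-- Max-plus matrix-vector product over `WithBot ℝ`. -/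
def mpMul {n m : ℕ} (A : Fin n → Fin m → WithBot ℝ) (x : Fin m → WithBot ℝ) :
    Fin n → WithBot ℝ :=
  fun i => univ.sup fun j => A i j + x j

/-- The `2 × 3m` matrix `A` with columns `(a_i, 2a_i)`, `(b_i, 2b_i)`, `(c_i, 2c_i)`,
where `b_i = (a_i + c_i)/2`. -/
noncomputable def Amat {m : ℕ} (a c : Fin m → ℝ) : Fin 2 → Fin (3 * m) → ℝ :=
  fun k j =>
    let i : Fin m := ⟨j.val / 3, by have := j.isLt; omega⟩
    let v : ℝ := if j.val % 3 = 0 then a i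
      else if j.val % 3 = 1 then (a i + c i) / 2 else c i
    if k = 0 then v else 2 * v

/-- The `2 × 3m` matrix `B` with columns `(0, a_i)`, `(0, c_i)`, `(0, b_i)`. -/
noncomputable def Bmat {m : ℕ} (a c : Fin m → ℝ) : Fin 2 → Fin (3 * m) → ℝ :=
  fun k j =>
    let i : Fin m := ⟨j.val / 3, by have := j.isLt; omega⟩
    if k = 0 then 0
    else if j.val % 3 = 0 then a i
      else if j.val % 3 = 1 then c i else (a i + c i) / 2

/-- the block index of a column -/
def blk {m : ℕ} (j : Fin (3 * m)) : Fin m := ⟨j.val / 3, by have := j.isLt; omega⟩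

lemma Amat_zero_eq {m : ℕ} (a c : Fin m → ℝ) (j : Fin (3 * m)) :
    Amat a c 0 j = (if j.val % 3 = 0 then a (blk j)
      else if j.val % 3 = 1 then (a (blk j) + c (blk j)) / 2 else c (blk j)) := rfl

lemma Amat_one_eq {m : ℕ} (a c : Fin m → ℝ) (j : Fin (3 * m)) :
    Amat a c 1 j = 2 * Amat a c 0 j := rfl

lemma Bmat_zero_eq {m : ℕ} (a c : Fin m → ℝ) (j : Fin (3 * m)) :
    Bmat a c 0 j = 0 := rfl

lemma Bmat_one_eq {m : ℕ} (a c : Fin m → ℝ) (j : Fin (3 * m)) :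
    Bmat a c 1 j = (if j.val % 3 = 0 then a (blk j)
      else if j.val % 3 = 1 then c (blk j) else (a (blk j) + c (blk j)) / 2) := rfl

lemma col_bounds {m : ℕ} (a c : Fin m → ℝ) (hac : ∀ i, a i ≤ c i) (j : Fin (3 * m)) :
    a (blk j) ≤ Amat a c 0 j ∧ Amat a c 0 j ≤ c (blk j) ∧
    a (blk j) ≤ Bmat a c 1 j ∧ Bmat a c 1 j ≤ c (blk j) ∧
    a (blk j) + Bmat a c 1 j ≤ 2 * Amat a c 0 j := by
  have h := hac (blk j)
  have h3 : j.val % 3 = 0 ∨ j.val % 3 = 1 ∨ j.val % 3 = 2 := by omega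
  rcases h3 with h3 | h3 | h3 <;>
    rw [Amat_zero_eq, Bmat_one_eq] <;> simp [h3] <;>
    constructor <;> try constructor
  all_goals try constructor
  all_goals linarith

/-- translate a max-plus row sup over `WithBot ℝ` to a real `sup'` over the support. -/
lemma sup_coe_eq {n : ℕ} {S : Finset (Fin n)} (hS : S.Nonempty)
    (x : Fin n → WithBot ℝ) (xr : Fin n → ℝ)
    (hbot : ∀ j, j ∉ S → x j = ⊥) (hxr : ∀ j ∈ S, x j = ↑(xr j)) (g : Fin n → ℝ) :
    (univ.sup fun j => ((g j : ℝ) : WithBot ℝ) + x j)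
      = ↑(S.sup' hS fun j => g j + xr j) := by
  apply le_antisymm
  · apply Finset.sup_le
    intro j _
    by_cases hj : j ∈ S
    · rw [hxr j hj, ← WithBot.coe_add]
      exact WithBot.coe_le_coe.mpr (Finset.le_sup' (fun j => g j + xr j) hj)
    · rw [hbot j hj, WithBot.add_bot]; exact bot_le
  · obtain ⟨j, hj, hje⟩ := Finset.exists_mem_eq_sup' hS (fun j => g j + xr j)
    rw [hje, WithBot.coe_add, ← hxr j hj]
    exact Finset.le_sup (f := fun j => ((g j : ℝ) : WithBot ℝ) + x j) (mem_univ j)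

/-- compute a max-plus row sup when an upper bound is attained. -/
lemma sup_eq_of_bound {n : ℕ} (F : Fin n → WithBot ℝ) (t : ℝ)
    (hub : ∀ j, F j ≤ (t : WithBot ℝ)) (j0 : Fin n) (hj0 : F j0 = (t : WithBot ℝ)) :
    univ.sup F = (t : WithBot ℝ) :=
  le_antisymm (Finset.sup_le fun j _ => hub j) (hj0 ▸ Finset.le_sup (mem_univ j0))

/-- For intervals `[a_i, c_i]` with `a_i ≤ c_i < a_{i+1}`, the spectrum of the
two-sided max-plus eigenproblem `A ⊗ x = λ ⊗ B ⊗ x` is `⋃ i [a_i, c_i]`: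
every finite system of intervals and points is a spectrum. -/
theorem spectrum_eq_union_of_intervals {m : ℕ} (a c : Fin m → ℝ)
    (hac : ∀ i, a i ≤ c i) (hsep : ∀ i j : Fin m, i < j → c i < a j) :
    {lam : ℝ | ∃ x : Fin (3 * m) → WithBot ℝ, (∃ j, x j ≠ ⊥) ∧
        mpMul (fun k j => ((Amat a c k j : ℝ) : WithBot ℝ)) x =
          fun k => (lam : WithBot ℝ) +
            mpMul (fun k j => ((Bmat a c k j : ℝ) : WithBot ℝ)) x k} =
      ⋃ i : Fin m, Set.Icc (a i) (c i) := by
  classical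
  ext lam
  simp only [Set.mem_setOf_eq, Set.mem_iUnion, Set.mem_Icc]
  constructor
  · rintro ⟨x, ⟨jw, hjw⟩, heq⟩
    by_contra hnot
    push_neg at hnot
    set S : Finset (Fin (3 * m)) := univ.filter (fun j => x j ≠ ⊥) with hSdef
    have hS : S.Nonempty := ⟨jw, by simp [hSdef, hjw]⟩
    set xr : Fin (3 * m) → ℝ := fun j => WithBot.unbotD 0 (x j) with hxrdef
    have hbot : ∀ j, j ∉ S → x j = ⊥ := by
      intro j hj; by_contra h; exact hj (by simp [hSdef, h])
    have hxr : ∀ j ∈ S, x j = ↑(xr j) := by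
      intro j hj
      have hne : x j ≠ ⊥ := by simpa [hSdef] using hj
      cases hxj : x j with
      | bot => exact absurd hxj hne
      | coe r => simp [hxrdef, hxj]
    have h0 := congrFun heq 0
    have h1 := congrFun heq 1
    simp only [mpMul] at h0 h1
    rw [sup_coe_eq hS x xr hbot hxr (fun j => Amat a c 0 j),
        sup_coe_eq hS x xr hbot hxr (fun j => Bmat a c 0 j)] at h0
    rw [sup_coe_eq hS x xr hbot hxr (fun j => Amat a c 1 j),
        sup_coe_eq hS x xr hbot hxr (fun j => Bmat a c 1 j)] at h1
    rw [← WithBot.coe_add, WithBot.coe_inj] at h0 h1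
    -- notation
    set M : ℝ := S.sup' hS xr with hMdef
    have hB0 : (S.sup' hS fun j => Bmat a c 0 j + xr j) = M := by
      apply Finset.sup'_congr hS rfl
      intro j _; rw [Bmat_zero_eq]; ring
    rw [hB0] at h0
    -- h0 : sup' (A0 + xr) = lam + M
    obtain ⟨j0, hj0S, hj0e⟩ := Finset.exists_mem_eq_sup' hS (fun j => Amat a c 0 j + xr j)
    have hj0v : Amat a c 0 j0 + xr j0 = lam + M := by rw [← hj0e, h0]
    have hxj0 : xr j0 ≤ M := Finset.le_sup' xr hj0S
    obtain ⟨hb1, hb2, hb3, hb4, hb5⟩ := col_bounds a c hac j0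
    have hv0 : lam < Amat a c 0 j0 := by
      by_contra h
      push_neg at h
      have := hnot (blk j0) (by linarith)
      linarith
    -- row one
    obtain ⟨j1, hj1S, hj1e⟩ := Finset.exists_mem_eq_sup' hS (fun j => (Bmat a c 1 j + xr j : ℝ))
    set R : ℝ := S.sup' hS fun j => Bmat a c 1 j + xr j with hRdef
    have hQ0 : Amat a c 1 j0 + xr j0 ≤ lam + R := by
      rw [← h1]; exact Finset.le_sup' (fun j => Amat a c 1 j + xr j) hj0S
    rw [Amat_one_eq] at hQ0
    have hRlarge : lam + M < R := by nlinarith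
    have hj1v : Bmat a c 1 j1 + xr j1 = R := hj1e.symm
    have hxj1 : xr j1 ≤ M := Finset.le_sup' xr hj1S
    obtain ⟨hc1, hc2, hc3, hc4, hc5⟩ := col_bounds a c hac j1
    have hw1 : lam < Bmat a c 1 j1 := by linarith
    have ha1 : lam < a (blk j1) := by
      by_contra h
      push_neg at h
      have := hnot (blk j1) h
      linarith
    have hQ1 : Amat a c 1 j1 + xr j1 ≤ lam + R := by
      rw [← h1]; exact Finset.le_sup' (fun j => Amat a c 1 j + xr j) hj1S
    rw [Amat_one_eq] at hQ1
    linarith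
  · rintro ⟨i, hai, hci⟩
    set b : ℝ := (a i + c i) / 2 with hbdef
    set u : ℝ := min (lam - b) 0 with hudef
    have hu0 : u ≤ 0 := min_le_right _ _
    have hu1 : u ≤ lam - b := min_le_left _ _
    have hu2 : a i - b ≤ u := le_min (by linarith) (by linarith [hac i])
    set ξ : ℕ → ℝ := fun s => if s = 0 then 0 else if s = 1 then u else u + lam - c i
      with hξdef
    refine ⟨fun j => if j.val / 3 = i.val then ((ξ (j.val % 3) : ℝ) : WithBot ℝ) else ⊥,
        ⟨⟨3 * i.val, by have := i.isLt; omega⟩, by simp⟩, ?_⟩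
    have hblk : ∀ j : Fin (3 * m), j.val / 3 = i.val → blk j = i := by
      intro j hj; exact Fin.ext hj
    -- the three distinguished columns
    have hcol : ∀ s : ℕ, s < 3 → ∃ j : Fin (3 * m), j.val = 3 * i.val + s := by
      intro s hs; exact ⟨⟨3 * i.val + s, by have := i.isLt; omega⟩, rfl⟩
    obtain ⟨j0, hj0⟩ := hcol 0 (by norm_num)
    obtain ⟨j1, hj1⟩ := hcol 1 (by norm_num)
    obtain ⟨j2, hj2⟩ := hcol 2 (by norm_num)
    have hj0d : j0.val / 3 = i.val := by omega
    have hj1d : j1.val / 3 = i.val := by omega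
    have hj2d : j2.val / 3 = i.val := by omega
    have hj0m : j0.val % 3 = 0 := by omega
    have hj1m : j1.val % 3 = 1 := by omega
    have hj2m : j2.val % 3 = 2 := by omega
    funext k
    have key : ∀ (g : Fin (3 * m) → ℝ) (t : ℝ),
        (∀ j : Fin (3 * m), j.val / 3 = i.val → g j + ξ (j.val % 3) ≤ t) →
        (∃ j : Fin (3 * m), j.val / 3 = i.val ∧ g j + ξ (j.val % 3) = t) →
        (univ.sup fun j => ((g j : ℝ) : WithBot ℝ) +
          (if j.val / 3 = i.val then ((ξ (j.val % 3) : ℝ) : WithBot ℝ) else ⊥)) =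
          (t : WithBot ℝ) := by
      intro g t hub ⟨ja, hja, hjae⟩
      refine sup_eq_of_bound _ t ?_ ja ?_
      · intro j
        by_cases hj : j.val / 3 = i.val
        · rw [if_pos hj, ← WithBot.coe_add]
          exact WithBot.coe_le_coe.mpr (hub j hj)
        · rw [if_neg hj, WithBot.add_bot]; exact bot_le
      · rw [if_pos hja, ← WithBot.coe_add, hjae]
    have hξ0 : ξ 0 = 0 := rfl
    have hξ1 : ξ 1 = u := rfl
    have hξ2 : ξ 2 = u + lam - c i := rfl
    fin_cases k <;> simp only [Fin.zero_eta, Fin.mk_one, Fin.isValue]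
    · -- row 0
      simp only [mpMul]
      rw [key (Amat a c 0) lam ?ub ?att,
          key (Bmat a c 0) 0 ?ub2 ?att2]
      · norm_num
      case ub =>
        intro j hj
        rw [Amat_zero_eq, hblk j hj]
        have h3 : j.val % 3 = 0 ∨ j.val % 3 = 1 ∨ j.val % 3 = 2 := by omega
        rcases h3 with h3 | h3 | h3 <;> rw [h3] <;> simp [hξ0, hξ1, hξ2] <;> linarith
      case att =>
        rcases le_total lam b with hlb | hlb
        · refine ⟨j1, hj1d, ?_⟩
          rw [Amat_zero_eq, hblk j1 hj1d, hj1m]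
          have : u = lam - b := min_eq_left (by linarith)
          simp [hξ1, this, hbdef]
        · refine ⟨j2, hj2d, ?_⟩
          rw [Amat_zero_eq, hblk j2 hj2d, hj2m]
          have : u = 0 := min_eq_right (by linarith)
          simp [hξ2, this]
      case ub2 =>
        intro j hj
        rw [Bmat_zero_eq]
        have h3 : j.val % 3 = 0 ∨ j.val % 3 = 1 ∨ j.val % 3 = 2 := by omega
        rcases h3 with h3 | h3 | h3 <;> rw [h3] <;> simp [hξ0, hξ1, hξ2] <;> linarith
      case att2 =>
        exact ⟨j0, hj0d, by rw [Bmat_zero_eq, hj0m, hξ0]; ring⟩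
    · -- row 1
      simp only [mpMul]
      rw [key (Amat a c 1) (c i + lam + u) ?ub ?att,
          key (Bmat a c 1) (c i + u) ?ub2 ?att2]
      · rw [← WithBot.coe_add, WithBot.coe_inj]; ring
      case ub =>
        intro j hj
        rw [Amat_one_eq, Amat_zero_eq, hblk j hj]
        have h3 : j.val % 3 = 0 ∨ j.val % 3 = 1 ∨ j.val % 3 = 2 := by omega
        rcases h3 with h3 | h3 | h3 <;> rw [h3] <;> simp [hξ0, hξ1, hξ2, hbdef] <;> linarith
      case att =>
        refine ⟨j2, hj2d, ?_⟩
        rw [Amat_one_eq, Amat_zero_eq, hblk j2 hj2d, hj2m]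
        simp [hξ2]; ring
      case ub2 =>
        intro j hj
        rw [Bmat_one_eq, hblk j hj]
        have h3 : j.val % 3 = 0 ∨ j.val % 3 = 1 ∨ j.val % 3 = 2 := by omega
        rcases h3 with h3 | h3 | h3 <;> rw [h3] <;> simp [hξ0, hξ1, hξ2, hbdef] <;> linarith
      case att2 =>
        refine ⟨j1, hj1d, ?_⟩
        rw [Bmat_one_eq, hblk j1 hj1d, hj1m]
        simp [hξ1]
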